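/- Let X be a finite T₀-space and let A ⊆ X. Then the collection Ω(X,A) = {W ⊆ X : W is a dbp–retract of X and A ⊆ W} is closed under binary intersections. In particular, Ω(X,A) has a minimum element with respect to set inclusion, and the intersection of any two dbp–retracts of X is a dbp–retract of X. -/
import Mathlib


open unitInterval

set_option autoImplicit false

universe u v

/-- The specialization preorder: `x ≤ y` iff every open set containing `y` contains `x`. -/
def specLE {X : Type*} [TopologicalSpace X] (x y : X) : Prop :=
  ∀ U : Set X, IsOpen U → y ∈ U → x ∈ U

/-- A continuous map `i : A → X` is a (Hurewicz) cofibration iff it has the homotopy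
extension property with respect to all topological spaces. -/
def IsCofibration {A : Type*} {X : Type*} [TopologicalSpace A] [TopologicalSpace X]
    (i : C(A, X)) : Prop :=
  ∀ (Z : Type v) [TopologicalSpace Z] (f : C(X, Z)) (H : C(A × I, Z)),
    (∀ a, H (a, 0) = f (i a)) →
    ∃ G : C(X × I, Z),
      (∀ x, G (x, 0) = f x) ∧ ∀ a t, G (i a, t) = H (a, t)

/-- `x` is a down beat point of the subspace `S`:
the set of points of `S` strictly below `x` has a maximum. -/
def IsDownBeatPoint {X : Type*} [TopologicalSpace X] (S : Set X) (x : X) : Prop :=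
  x ∈ S ∧ ∃ m ∈ S, m ≠ x ∧ specLE m x ∧
    ∀ z ∈ S, z ≠ x → specLE z x → specLE z m

/-- `T` is a dbp–retract of `S`: `T` is obtained from `S` by successively
removing down beat points. -/
inductive IsDbpRetract {X : Type*} [TopologicalSpace X] : Set X → Set X → Prop
  | refl (S : Set X) : IsDbpRetract S S
  | step {S T : Set X} (x : X) (hx : IsDownBeatPoint S x)
      (h : IsDbpRetract (S \ {x}) T) : IsDbpRetract S T

/-- The minimal open set containing `x` (in a finite space): the intersection of all
open sets containing `x`. -/
def minOpen {X : Type*} [TopologicalSpace X] (x : X) : Set X :=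
  ⋂₀ {U : Set X | IsOpen U ∧ x ∈ U}


section Aux
variable {X : Type u} [TopologicalSpace X]

lemma specLE_refl' (x : X) : specLE x x := fun _ _ h => h

lemma specLE_trans' {x y z : X} (h1 : specLE x y) (h2 : specLE y z) : specLE x z :=
  fun U hU hz => h1 U hU (h2 U hU hz)

lemma specLE_antisymm' [T0Space X] {x y : X} (h1 : specLE x y) (h2 : specLE y x) : x = y := by
  refine Inseparable.eq ?_
  rw [inseparable_iff_forall_isOpen]
  intro U hU
  exact ⟨fun hx => h2 U hU hx, fun hy => h1 U hU hy⟩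

lemma IsDbpRetract.subset' {S T : Set X} (h : IsDbpRetract S T) : T ⊆ S := by
  induction h with
  | refl S => exact subset_rfl
  | step x hx h ih => exact ih.trans Set.diff_subset

/-- Forward direction: a dbp-retract admits a monotone retraction below the identity. -/
lemma exists_retraction_of_dbp {S W : Set X} (h : IsDbpRetract S W) :
    ∃ r : X → X, (∀ a ∈ S, r a ∈ W) ∧ (∀ a ∈ W, r a = a) ∧
      (∀ a ∈ S, ∀ b ∈ S, specLE a b → specLE (r a) (r b)) ∧
      (∀ a ∈ S, specLE (r a) a) := by
  induction h with
  | refl S =>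
    exact ⟨id, fun a ha => ha, fun a _ => rfl, fun a _ b _ hab => hab,
      fun a _ => specLE_refl' a⟩
  | @step S' T' x hx h ih =>
    obtain ⟨r₁, h1, h2, h3, h4⟩ := ih
    obtain ⟨hxS, m, hmS, hmx, hmle, hmax⟩ := hx
    classical
    set r₀ : X → X := fun y => if y = x then m else y with hr₀
    have hWsub : T' ⊆ S' \ {x} := h.subset'
    have hr₀mem : ∀ a ∈ S', r₀ a ∈ S' \ {x} := by
      intro a ha
      by_cases hax : a = x
      · simp only [hr₀, hax, if_pos rfl]; exact ⟨hmS, hmx⟩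
      · simp only [hr₀, if_neg hax]; exact ⟨ha, hax⟩
    have hr₀le : ∀ a ∈ S', specLE (r₀ a) a := by
      intro a ha
      by_cases hax : a = x
      · simp only [hr₀, hax, if_pos rfl]; exact hmle
      · simp only [hr₀, if_neg hax]; exact specLE_refl' a
    have hr₀mono : ∀ a ∈ S', ∀ b ∈ S', specLE a b → specLE (r₀ a) (r₀ b) := by
      intro a ha b hb hab
      by_cases hax : a = x
      · by_cases hbx : b = x
        · simp only [hr₀, hax, hbx, if_pos rfl]; exact specLE_refl' m
        · simp only [hr₀, hax, if_pos rfl, if_neg hbx]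
          exact specLE_trans' hmle (hax ▸ hab)
      · by_cases hbx : b = x
        · simp only [hr₀, if_neg hax, hbx, if_pos rfl]
          exact hmax a ha hax (hbx ▸ hab)
        · simp only [hr₀, if_neg hax, if_neg hbx]; exact hab
    refine ⟨r₁ ∘ r₀, ?_, ?_, ?_, ?_⟩
    · intro a ha
      exact h1 _ (hr₀mem a ha)
    · intro a haW
      have haW' : a ∈ S' \ {x} := hWsub haW
      have hax : a ≠ x := fun he => haW'.2 (by simp [he])
      have : r₀ a = a := by simp only [hr₀, if_neg hax]
      rw [Function.comp_apply, this]; exact h2 a haW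
    · intro a ha b hb hab
      exact h3 _ (hr₀mem a ha) _ (hr₀mem b hb) (hr₀mono a ha b hb hab)
    · intro a ha
      exact specLE_trans' (h4 _ (hr₀mem a ha)) (hr₀le a ha)

/-- A nonempty finite set has a minimal element for `specLE`. -/
lemma exists_specLE_minimal [T0Space X] [Finite X] :
    ∀ (n : ℕ) (s : Set X), s.ncard = n → s.Nonempty →
      ∃ x ∈ s, ∀ z ∈ s, specLE z x → z = x := by
  intro n
  induction n using Nat.strong_induction_on with
  | _ n ih =>
    intro s hn hs
    obtain ⟨a, ha⟩ := hs
    set t : Set X := {z ∈ s | specLE z a ∧ z ≠ a} with ht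
    rcases t.eq_empty_or_nonempty with hte | htne
    · refine ⟨a, ha, fun z hz hza => ?_⟩
      by_contra hne
      have : z ∈ t := ⟨hz, hza, hne⟩
      rw [hte] at this; exact this
    · have htsub : t ⊂ s := by
        constructor
        · intro z hz; exact hz.1
        · intro hsub
          have : a ∈ t := hsub ha
          exact this.2.2 rfl
      have hlt : t.ncard < n := by
        rw [← hn]
        exact Set.ncard_lt_ncard htsub (Set.toFinite s)
      obtain ⟨x, hxt, hxmin⟩ := ih t.ncard hlt t rfl htne
      refine ⟨x, hxt.1, fun z hz hzx => ?_⟩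
      by_cases hza : z = a
      · subst hza
        exact (specLE_antisymm' hxt.2.1 hzx).symm
      · have hzt : z ∈ t := ⟨hz, specLE_trans' hzx hxt.2.1, hza⟩
        exact hxmin z hzt hzx

/-- Converse direction: a monotone retraction below the identity yields a dbp-retract. -/
lemma dbp_of_retraction [T0Space X] [Finite X] :
    ∀ (n : ℕ) (S W : Set X), (S \ W).ncard = n → W ⊆ S →
      (∃ r : X → X, (∀ a ∈ S, r a ∈ W) ∧ (∀ a ∈ W, r a = a) ∧
        (∀ a ∈ S, ∀ b ∈ S, specLE a b → specLE (r a) (r b)) ∧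
        (∀ a ∈ S, specLE (r a) a)) → IsDbpRetract S W := by
  intro n
  induction n using Nat.strong_induction_on with
  | _ n ih =>
    intro S W hn hWS hr
    obtain ⟨r, h1, h2, h3, h4⟩ := hr
    rcases (S \ W).eq_empty_or_nonempty with hd | hd
    · have : S = W := subset_antisymm (Set.diff_eq_empty.mp hd) hWS
      rw [this]; exact IsDbpRetract.refl W
    · obtain ⟨x, hx, hxmin⟩ := exists_specLE_minimal (S \ W).ncard (S \ W) rfl hd
      have hxS : x ∈ S := hx.1
      have hxW : x ∉ W := hx.2
      set m := r x with hm
      have hmW : m ∈ W := h1 x hxS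
      have hmx : m ≠ x := fun h => hxW (h ▸ hmW)
      have hdbp : IsDownBeatPoint S x := by
        refine ⟨hxS, m, hWS hmW, hmx, h4 x hxS, ?_⟩
        intro z hz hzx hzlex
        by_cases hzW : z ∈ W
        · have := h3 z hz x hxS hzlex
          rwa [h2 z hzW] at this
        · exact absurd (hxmin z ⟨hz, hzW⟩ hzlex) hzx
      refine IsDbpRetract.step x hdbp ?_
      have hWsub : W ⊆ S \ {x} := fun w hw => ⟨hWS hw, fun he => hxW (by simpa using he ▸ hw)⟩
      have hcard : ((S \ {x}) \ W).ncard < n := by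
        have he : (S \ {x}) \ W = (S \ W) \ {x} := by
          ext z; simp only [Set.mem_diff, Set.mem_singleton_iff]; tauto
        rw [← hn, he]
        refine Set.ncard_lt_ncard ?_ (Set.toFinite _)
        exact ⟨Set.diff_subset, fun hsub => (hsub hx).2 rfl⟩
      refine ih _ hcard (S \ {x}) W rfl hWsub ⟨r, ?_, h2, ?_, ?_⟩
      · intro a ha; exact h1 a ha.1
      · intro a ha b hb; exact h3 a ha.1 b hb.1
      · intro a ha; exact h4 a ha.1

lemma specLE_iterate_le {f : X → X} (hf : ∀ a, specLE (f a) a) (x : X) :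
    ∀ m n : ℕ, m ≤ n → specLE (f^[n] x) (f^[m] x) := by
  intro m n
  induction n with
  | zero =>
    intro hmn
    have : m = 0 := Nat.le_zero.mp hmn
    subst this; exact specLE_refl' _
  | succ n ihn =>
    intro hmn
    rcases Nat.lt_or_ge m (n+1) with h | h
    · have hmn' : m ≤ n := Nat.lt_succ_iff.mp h
      rw [Function.iterate_succ_apply']
      exact specLE_trans' (hf _) (ihn hmn')
    · have : m = n + 1 := le_antisymm hmn h
      subst this; exact specLE_refl' _

lemma specLE_iterate_mono {f : X → X} (hf : ∀ a b : X, specLE a b → specLE (f a) (f b)) :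
    ∀ (n : ℕ) (a b : X), specLE a b → specLE (f^[n] a) (f^[n] b) := by
  intro n
  induction n with
  | zero => intro a b h; exact h
  | succ n ihn =>
    intro a b h
    rw [Function.iterate_succ_apply', Function.iterate_succ_apply']
    exact hf _ _ (ihn a b h)

lemma iterate_stab_persist {f : X → X} {x : X} {n : ℕ} (h : f^[n+1] x = f^[n] x) :
    ∀ k : ℕ, f^[n + k] x = f^[n] x := by
  intro k
  induction k with
  | zero => rfl
  | succ k ihk =>
    have e : n + (k+1) = (n + k) + 1 := by ring
    rw [e, Function.iterate_succ_apply', ihk, ← Function.iterate_succ_apply' f n x, h]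

lemma exists_uniform_stab [T0Space X] [Finite X] {f : X → X}
    (hf : ∀ a, specLE (f a) a) :
    ∃ N : ℕ, ∀ x : X, f^[N+1] x = f^[N] x := by
  have hpt : ∀ x : X, ∃ n : ℕ, f^[n+1] x = f^[n] x := by
    intro x
    by_contra hc
    push_neg at hc
    have hinj : Function.Injective (fun n => f^[n] x) := by
      intro i j hij
      have hij' : f^[i] x = f^[j] x := hij
      by_contra hne
      rcases Nat.lt_or_ge i j with h | h
      · have h1 : specLE (f^[j] x) (f^[i+1] x) := specLE_iterate_le hf x (i+1) j h
        have h2 : specLE (f^[i+1] x) (f^[i] x) :=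
          specLE_iterate_le hf x i (i+1) (Nat.le_succ i)
        rw [← hij'] at h1
        exact hc i (specLE_antisymm' h2 h1)
      · have h' : j < i := lt_of_le_of_ne h (fun he => hne (he ▸ rfl))
        have h1 : specLE (f^[i] x) (f^[j+1] x) := specLE_iterate_le hf x (j+1) i h'
        have h2 : specLE (f^[j+1] x) (f^[j] x) :=
          specLE_iterate_le hf x j (j+1) (Nat.le_succ j)
        rw [hij'] at h1
        exact hc j (specLE_antisymm' h2 h1)
    haveI : Finite ℕ := Finite.of_injective _ hinj
    exact not_finite ℕ
  choose nf hnf using hpt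
  cases nonempty_fintype X
  refine ⟨Finset.univ.sup nf, fun x => ?_⟩
  have hle : nf x ≤ Finset.univ.sup nf := Finset.le_sup (Finset.mem_univ x)
  obtain ⟨k, hk⟩ := Nat.exists_eq_add_of_le hle
  have e1 : f^[Finset.univ.sup nf] x = f^[nf x] x := by
    rw [hk]; exact iterate_stab_persist (hnf x) k
  have e2 : f^[Finset.univ.sup nf + 1] x = f^[nf x] x := by
    have e : Finset.univ.sup nf + 1 = nf x + (k + 1) := by omega
    rw [e]; exact iterate_stab_persist (hnf x) (k+1)
  rw [e1, e2]

/-- Intersection of two dbp-retracts of the whole space is a dbp-retract. -/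
lemma dbp_inter [T0Space X] [Finite X] {B C : Set X}
    (hB : IsDbpRetract (Set.univ : Set X) B) (hC : IsDbpRetract (Set.univ : Set X) C) :
    IsDbpRetract (Set.univ : Set X) (B ∩ C) := by
  obtain ⟨r₁, hB1, hB2, hB3, hB4⟩ := exists_retraction_of_dbp hB
  obtain ⟨r₂, hC1, hC2, hC3, hC4⟩ := exists_retraction_of_dbp hC
  set f : X → X := r₂ ∘ r₁ with hfdef
  have hfle : ∀ a, specLE (f a) a := fun a =>
    specLE_trans' (hC4 (r₁ a) trivial) (hB4 a trivial)
  have hfmono : ∀ a b : X, specLE a b → specLE (f a) (f b) := fun a b hab =>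
    hC3 _ trivial _ trivial (hB3 a trivial b trivial hab)
  have hffix : ∀ a ∈ B ∩ C, f a = a := by
    intro a ha
    simp only [hfdef, Function.comp_apply, hB2 a ha.1, hC2 a ha.2]
  obtain ⟨N, hN⟩ := exists_uniform_stab hfle
  have hrfix : ∀ a : X, f (f^[N] a) = f^[N] a := by
    intro a
    have := hN a
    rwa [Function.iterate_succ_apply'] at this
  have hrmem : ∀ a : X, f^[N] a ∈ B ∩ C := by
    intro a
    set y := f^[N] a with hy
    have hfy : r₂ (r₁ y) = y := hrfix a
    have h1 : specLE (r₁ y) y := hB4 y trivial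
    have h2 : specLE (r₂ (r₁ y)) (r₁ y) := hC4 (r₁ y) trivial
    rw [hfy] at h2
    have hy1 : r₁ y = y := specLE_antisymm' h1 h2
    have hyB : y ∈ B := by rw [← hy1]; exact hB1 y trivial
    have hr2 : r₂ y = y := by
      have e : r₂ y = r₂ (r₁ y) := by rw [hy1]
      rw [e]; exact hfy
    have hyC : y ∈ C := by rw [← hr2]; exact hC1 y trivial
    exact ⟨hyB, hyC⟩
  have hrfixW : ∀ a ∈ B ∩ C, f^[N] a = a := fun a ha =>
    Function.iterate_fixed (hffix a ha) N
  have hrmono : ∀ a b : X, specLE a b → specLE (f^[N] a) (f^[N] b) :=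
    fun a b hab => specLE_iterate_mono hfmono N a b hab
  have hrle : ∀ a : X, specLE (f^[N] a) a := by
    intro a
    have := specLE_iterate_le hfle a 0 N (Nat.zero_le N)
    simpa using this
  exact dbp_of_retraction (Set.univ \ (B ∩ C)).ncard Set.univ (B ∩ C) rfl
    (Set.subset_univ _)
    ⟨f^[N], fun a _ => hrmem a, hrfixW, fun a _ b _ hab => hrmono a b hab,
      fun a _ => hrle a⟩

end Aux

/-- Let `X` be a finite T₀-space and `A ⊆ X`. The collection
`Ω(X,A)` of dbp–retracts of `X` containing `A` is closed under binary intersections;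
in particular it has a minimum element for inclusion, and the intersection of any two
dbp–retracts of `X` is a dbp–retract of `X`. -/
theorem Omega_inter_closed_and_has_min
    {X : Type u} [TopologicalSpace X] [Finite X] [T0Space X] (A : Set X) :
    (∀ W₁ W₂ : Set X,
      IsDbpRetract (Set.univ : Set X) W₁ → A ⊆ W₁ →
      IsDbpRetract (Set.univ : Set X) W₂ → A ⊆ W₂ →
      IsDbpRetract (Set.univ : Set X) (W₁ ∩ W₂) ∧ A ⊆ W₁ ∩ W₂) ∧
    (∃ M : Set X, IsDbpRetract (Set.univ : Set X) M ∧ A ⊆ M ∧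
      ∀ W : Set X, IsDbpRetract (Set.univ : Set X) W → A ⊆ W → M ⊆ W) ∧
    (∀ B C : Set X, IsDbpRetract (Set.univ : Set X) B →
      IsDbpRetract (Set.univ : Set X) C →
      IsDbpRetract (Set.univ : Set X) (B ∩ C)) := by
  have hinter : ∀ B C : Set X, IsDbpRetract (Set.univ : Set X) B →
      IsDbpRetract (Set.univ : Set X) C →
      IsDbpRetract (Set.univ : Set X) (B ∩ C) := fun B C hB hC => dbp_inter hB hC
  refine ⟨fun W₁ W₂ h1 hA1 h2 hA2 => ⟨hinter _ _ h1 h2, Set.subset_inter hA1 hA2⟩, ?_, hinter⟩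
  -- minimum element
  set Omega : Set (Set X) := {W | IsDbpRetract (Set.univ : Set X) W ∧ A ⊆ W} with hOm
  have hne : (Set.univ : Set X) ∈ Omega := ⟨IsDbpRetract.refl _, Set.subset_univ A⟩
  set K : Set ℕ := (fun W : Set X => W.ncard) '' Omega with hK
  have hKne : K.Nonempty := ⟨_, Set.mem_image_of_mem _ hne⟩
  obtain ⟨M, hM, hMcard⟩ : ∃ M ∈ Omega, M.ncard = sInf K := by
    obtain ⟨W, hW, hWc⟩ := Nat.sInf_mem hKne
    exact ⟨W, hW, hWc⟩
  refine ⟨M, hM.1, hM.2, fun W hW hAW => ?_⟩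
  have hMW : M ∩ W ∈ Omega := ⟨dbp_inter hM.1 hW, Set.subset_inter hM.2 hAW⟩
  have hle : sInf K ≤ (M ∩ W).ncard := Nat.sInf_le ⟨_, hMW, rfl⟩
  have hsub : M ∩ W ⊆ M := Set.inter_subset_left
  have hcard : M.ncard ≤ (M ∩ W).ncard := hMcard ▸ hle
  have heq : M ∩ W = M := Set.eq_of_subset_of_ncard_le hsub hcard (Set.toFinite M)
  intro x hx
  have hx' : x ∈ M ∩ W := by rw [heq]; exact hx
  exact hx'.2
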